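/- arXiv:1208.3694 — 2 statements merged into one kernel-verified Lean document; each statement's English description precedes it below -/
import Mathlib

section
/- Let 1 ≤ p < ∞ with conjugate exponent q, let F ∈ L^p(ℝ), let g ∈ L^q(ℝ) and let G(x) = ∫_0^x g(t) dt. For 0 < M < N and ε > 0 define E_{(M,N),ε} = { x ∈ (M,N) : |F(x)G(x)| > ε }, and let λ denote Lebesgue measure. If 1 < p < ∞ then λ(E_{(M,N),ε})/(N−M) ≤ ‖F·χ_{(M,N)}‖_p ‖g‖_q (N^q − M^q)^{1/q} / (ε q^{1/q} (N−M)), and if p = 1 then λ(E_{(M,N),ε})/(N−M) ≤ ‖F·χ_{(M,N)}‖_1 ‖g‖_∞ N / (ε (N−M)). -/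
open MeasureTheory Filter Topology ENNReal

/-- Chebyshev-type estimate for the relative measure of
`E = {x ∈ (M,N) : |F(x)G(x)| > ε}` where `F ∈ L^p`, `g ∈ L^q` (conjugate exponents)
and `G(x) = ∫_0^x g`. -/
theorem stmt4 (p q : ℝ≥0∞) (hp : 1 ≤ p) (hp' : p ≠ ⊤) (hpq : 1 / p + 1 / q = 1)
    (F g : ℝ → ℝ) (hF : MemLp F p volume) (hg : MemLp g q volume)
    (G : ℝ → ℝ) (hG : ∀ x, G x = ∫ t in (0 : ℝ)..x, g t)
    (M N ε : ℝ) (hM : 0 < M) (hMN : M < N) (hε : 0 < ε) :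
    (1 < p →
      (volume {x : ℝ | x ∈ Set.Ioo M N ∧ ε < |F x * G x|}).toReal / (N - M) ≤
        (eLpNorm ((Set.Ioo M N).indicator F) p volume).toReal *
          (eLpNorm g q volume).toReal *
          (N ^ q.toReal - M ^ q.toReal) ^ (1 / q.toReal) /
          (ε * q.toReal ^ (1 / q.toReal) * (N - M))) ∧
    (p = 1 →
      (volume {x : ℝ | x ∈ Set.Ioo M N ∧ ε < |F x * G x|}).toReal / (N - M) ≤
        (eLpNorm ((Set.Ioo M N).indicator F) 1 volume).toReal *
          (eLpNorm g ⊤ volume).toReal * N / (ε * (N - M))) := by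
  have hNM : (0 : ℝ) < N - M := sub_pos.2 hMN
  have hN : (0 : ℝ) < N := hM.trans hMN
  have hconj : p.HolderConjugate q := ⟨by simpa [one_div] using hpq⟩
  have hq1' : 1 ≤ q := ENNReal.HolderConjugate.one_le q p
  have hgloc : LocallyIntegrable g volume := hg.locallyIntegrable hq1'
  have hgint : ∀ a b : ℝ, IntervalIntegrable g volume a b := fun a b =>
    intervalIntegrable_iff.2
      ((hgloc.integrableOn_isCompact isCompact_uIcc).mono_set Set.uIoc_subset_uIcc)
  have hGcont : Continuous G := by
    have h := intervalIntegral.continuous_primitive hgint 0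
    exact (funext hG : G = _) ▸ h
  set μ : Measure ℝ := volume.restrict (Set.Ioo M N) with hμ
  have hFae : AEStronglyMeasurable F μ := hF.aestronglyMeasurable.restrict
  set V : ℝ≥0∞ := volume {x : ℝ | x ∈ Set.Ioo M N ∧ ε < |F x * G x|} with hV
  -- Chebyshev-Markov step
  have cheb : ENNReal.ofReal ε * V ≤ ∫⁻ x, (‖F x‖₊ : ℝ≥0∞) * ‖G x‖₊ ∂μ := by
    have hsub : V ≤ μ {x | ENNReal.ofReal ε ≤ (‖F x‖₊ : ℝ≥0∞) * ‖G x‖₊} := by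
      rw [hV, hμ, Measure.restrict_apply' measurableSet_Ioo]
      refine measure_mono fun x hx => ⟨?_, hx.1⟩
      have : ENNReal.ofReal ε ≤ ENNReal.ofReal ‖F x * G x‖ :=
        ENNReal.ofReal_le_ofReal (by rw [Real.norm_eq_abs]; exact hx.2.le)
      rw [ofReal_norm, enorm_mul] at this
      exact this
    calc ENNReal.ofReal ε * V
        ≤ ENNReal.ofReal ε * μ {x | ENNReal.ofReal ε ≤ (‖F x‖₊ : ℝ≥0∞) * ‖G x‖₊} := by gcongr
      _ ≤ ∫⁻ x, (‖F x‖₊ : ℝ≥0∞) * ‖G x‖₊ ∂μ :=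
          mul_meas_ge_le_lintegral₀
            (hFae.enorm.mul hGcont.aestronglyMeasurable.restrict.enorm) _
  have hVtop : V ≠ ⊤ := by
    refine ne_top_of_le_ne_top ?_ (measure_mono fun x hx => hx.1)
    simp [Real.volume_Ioo]
  have hAeq : eLpNorm ((Set.Ioo M N).indicator F) p volume = eLpNorm F p μ :=
    eLpNorm_indicator_eq_eLpNorm_restrict measurableSet_Ioo
  have hAtop : eLpNorm ((Set.Ioo M N).indicator F) p volume ≠ ⊤ := by
    rw [hAeq]
    exact ne_top_of_le_ne_top hF.eLpNorm_ne_top (eLpNorm_mono_measure _ Measure.restrict_le_self)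
  have hCtop : eLpNorm g q volume ≠ ⊤ := hg.eLpNorm_ne_top
  constructor
  · -- case 1 < p
    intro hp1
    have hq_top : q ≠ ⊤ := by
      intro h
      rw [h] at hpq
      simp only [ENNReal.div_top, add_zero] at hpq
      rw [one_div, ENNReal.inv_eq_one] at hpq
      exact hp1.ne' hpq
    have hq1 : 1 < q := by
      rw [← ENNReal.inv_lt_one, ← ENNReal.HolderConjugate.one_sub_inv p q]
      have hpinv : (0 : ℝ≥0∞) < p⁻¹ := ENNReal.inv_pos.2 hp'
      exact ENNReal.sub_lt_self one_ne_top one_ne_zero hpinv.ne'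
    have hpr : 1 < p.toReal := by
      have := (ENNReal.toReal_lt_toReal one_ne_top hp').2 hp1
      simpa using this
    have hconjr : p.toReal.HolderConjugate q.toReal := by
      refine Real.holderConjugate_iff.2 ⟨hpr, ?_⟩
      have h := congrArg ENNReal.toReal hpq
      rw [one_div, one_div, ENNReal.toReal_add (by simpa using (zero_lt_one.trans hp1).ne')
        (by simpa using (zero_lt_one.trans hq1).ne'), ENNReal.toReal_inv,
        ENNReal.toReal_inv] at h
      simpa using h
    set qr := q.toReal with hqrdef
    have hqr1 : 1 < qr := (Real.holderConjugate_iff.1 hconjr.symm).1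
    have hqr0 : 0 < qr := zero_lt_one.trans hqr1
    set C := eLpNorm g q volume with hCdef
    -- pointwise bound for G
    have hGbd : ∀ x : ℝ, 0 ≤ x →
        (‖G x‖₊ : ℝ≥0∞) ≤ C * ENNReal.ofReal x ^ (1 / p.toReal) := by
      intro x hx
      have h1 : G x = ∫ t in Set.Ioc 0 x, g t := by
        rw [hG x, intervalIntegral.integral_of_le hx]
      calc (‖G x‖₊ : ℝ≥0∞) ≤ ∫⁻ t in Set.Ioc 0 x, (‖g t‖₊ : ℝ≥0∞) := by
            rw [h1]; exact enorm_integral_le_lintegral_enorm _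
        _ = eLpNorm g 1 (volume.restrict (Set.Ioc 0 x)) := by
            rw [eLpNorm_one_eq_lintegral_enorm]; rfl
        _ ≤ eLpNorm g q (volume.restrict (Set.Ioc 0 x)) *
              (volume.restrict (Set.Ioc 0 x)) Set.univ ^ (1 / (1 : ℝ≥0∞).toReal - 1 / q.toReal) :=
            eLpNorm_le_eLpNorm_mul_rpow_measure_univ hq1.le hg.aestronglyMeasurable.restrict
        _ ≤ C * ENNReal.ofReal x ^ (1 / p.toReal) := by
            gcongr
            · exact eLpNorm_mono_measure _ Measure.restrict_le_self
            · rw [Measure.restrict_apply_univ, Real.volume_Ioc, sub_zero]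
              have heq : 1 / (1 : ℝ≥0∞).toReal - 1 / q.toReal = 1 / p.toReal := by
                rw [ENNReal.toReal_one]
                have := hconjr.inv_add_inv_eq_one
                rw [one_div, one_div, one_div]; linarith
              rw [heq]
    -- lintegral bound for G ^ qr
    have hGq : ∫⁻ x, (‖G x‖₊ : ℝ≥0∞) ^ qr ∂μ ≤
        C ^ qr * ENNReal.ofReal ((N ^ qr - M ^ qr) / qr) := by
      have key : ∀ x ∈ Set.Ioo M N,
          (‖G x‖₊ : ℝ≥0∞) ^ qr ≤ C ^ qr * ENNReal.ofReal (x ^ (qr - 1)) := by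
        intro x hx
        have hx0 : 0 < x := hM.trans hx.1
        calc (‖G x‖₊ : ℝ≥0∞) ^ qr ≤ (C * ENNReal.ofReal x ^ (1 / p.toReal)) ^ qr := by
              gcongr
              exact hGbd x hx0.le
          _ = C ^ qr * ENNReal.ofReal (x ^ (qr - 1)) := by
              rw [ENNReal.mul_rpow_of_nonneg _ _ hqr0.le, ← ENNReal.rpow_mul,
                ENNReal.ofReal_rpow_of_pos hx0]
              congr 2
              rw [one_div, inv_mul_eq_div, hconjr.symm.div_conj_eq_sub_one]
      calc ∫⁻ x, (‖G x‖₊ : ℝ≥0∞) ^ qr ∂μ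
          ≤ ∫⁻ x in Set.Ioo M N, C ^ qr * ENNReal.ofReal (x ^ (qr - 1)) :=
            setLIntegral_mono (by fun_prop) key
        _ = C ^ qr * ∫⁻ x in Set.Ioo M N, ENNReal.ofReal (x ^ (qr - 1)) :=
            lintegral_const_mul' _ _ (ENNReal.rpow_ne_top_of_nonneg hqr0.le hCtop)
        _ ≤ C ^ qr * ENNReal.ofReal ((N ^ qr - M ^ qr) / qr) := by
            gcongr
            have hint : IntegrableOn (fun x : ℝ => x ^ (qr - 1)) (Set.Ioo M N) volume := by
              apply (ContinuousOn.integrableOn_Icc ?_).mono_set Set.Ioo_subset_Icc_self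
              exact continuousOn_id.rpow_const fun x hx =>
                Or.inl (ne_of_gt (lt_of_lt_of_le hM hx.1))
            rw [← MeasureTheory.ofReal_integral_eq_lintegral_ofReal hint
              ((ae_restrict_iff' measurableSet_Ioo).2 (Filter.Eventually.of_forall
                fun x hx => Real.rpow_nonneg (hM.trans hx.1).le _))]
            apply ENNReal.ofReal_le_ofReal
            rw [← MeasureTheory.integral_Ioc_eq_integral_Ioo,
              ← intervalIntegral.integral_of_le hMN.le,
              integral_rpow (Or.inl (by linarith)), sub_add_cancel]
    -- Hölder
    have holder : ∫⁻ x, (‖F x‖₊ : ℝ≥0∞) * ‖G x‖₊ ∂μ ≤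
        (∫⁻ x, (‖F x‖₊ : ℝ≥0∞) ^ p.toReal ∂μ) ^ (1 / p.toReal) *
          (∫⁻ x, (‖G x‖₊ : ℝ≥0∞) ^ qr ∂μ) ^ (1 / qr) := by
      have := ENNReal.lintegral_mul_le_Lp_mul_Lq μ hconjr hFae.enorm
        hGcont.aestronglyMeasurable.restrict.enorm
      simpa [Pi.mul_apply, enorm_eq_nnnorm] using this
    have hFnorm : (∫⁻ x, (‖F x‖₊ : ℝ≥0∞) ^ p.toReal ∂μ) ^ (1 / p.toReal) =
        eLpNorm ((Set.Ioo M N).indicator F) p volume := by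
      rw [hAeq, eLpNorm_eq_lintegral_rpow_enorm_toReal (zero_lt_one.trans_le hp).ne' hp']; rfl
    -- combine
    have hD0 : 0 ≤ (N ^ qr - M ^ qr) / qr :=
      div_nonneg (sub_nonneg.2 (Real.rpow_le_rpow hM.le hMN.le hqr0.le)) hqr0.le
    have main : ENNReal.ofReal ε * V ≤
        eLpNorm ((Set.Ioo M N).indicator F) p volume * C *
          ENNReal.ofReal (((N ^ qr - M ^ qr) / qr) ^ (1 / qr)) := by
      calc ENNReal.ofReal ε * V ≤ ∫⁻ x, (‖F x‖₊ : ℝ≥0∞) * ‖G x‖₊ ∂μ := cheb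
        _ ≤ (∫⁻ x, (‖F x‖₊ : ℝ≥0∞) ^ p.toReal ∂μ) ^ (1 / p.toReal) *
              (∫⁻ x, (‖G x‖₊ : ℝ≥0∞) ^ qr ∂μ) ^ (1 / qr) := holder
        _ ≤ eLpNorm ((Set.Ioo M N).indicator F) p volume *
              (C ^ qr * ENNReal.ofReal ((N ^ qr - M ^ qr) / qr)) ^ (1 / qr) := by
            rw [hFnorm]; gcongr
        _ = eLpNorm ((Set.Ioo M N).indicator F) p volume * C *
              ENNReal.ofReal (((N ^ qr - M ^ qr) / qr) ^ (1 / qr)) := by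
            rw [ENNReal.mul_rpow_of_nonneg _ _ (by positivity), ← ENNReal.rpow_mul,
              mul_one_div_cancel hqr0.ne', ENNReal.rpow_one,
              ENNReal.ofReal_rpow_of_nonneg hD0 (by positivity), mul_assoc]
    -- pass to reals
    have hfin : eLpNorm ((Set.Ioo M N).indicator F) p volume * C *
        ENNReal.ofReal (((N ^ qr - M ^ qr) / qr) ^ (1 / qr)) ≠ ⊤ :=
      ENNReal.mul_ne_top (ENNReal.mul_ne_top hAtop hCtop) ENNReal.ofReal_ne_top
    have hreal : ε * V.toReal ≤
        (eLpNorm ((Set.Ioo M N).indicator F) p volume).toReal * C.toReal *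
          ((N ^ qr - M ^ qr) / qr) ^ (1 / qr) := by
      have := ENNReal.toReal_mono hfin main
      rw [ENNReal.toReal_mul, ENNReal.toReal_mul, ENNReal.toReal_mul,
        ENNReal.toReal_ofReal hε.le, ENNReal.toReal_ofReal (by positivity)] at this
      exact this
    set a := (eLpNorm ((Set.Ioo M N).indicator F) p volume).toReal with hadef
    have ha0 : 0 ≤ a := ENNReal.toReal_nonneg
    have hc0 : 0 ≤ C.toReal := ENNReal.toReal_nonneg
    have hqrp : (0 : ℝ) < qr ^ (1 / qr) := Real.rpow_pos_of_pos hqr0 _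
    have hDsplit : ((N ^ qr - M ^ qr) / qr) ^ (1 / qr) =
        (N ^ qr - M ^ qr) ^ (1 / qr) / qr ^ (1 / qr) :=
      Real.div_rpow (sub_nonneg.2 (Real.rpow_le_rpow hM.le hMN.le hqr0.le)) hqr0.le _
    rw [div_le_div_iff₀ hNM (by positivity)]
    rw [hDsplit] at hreal
    have h2 : V.toReal ≤ a * C.toReal * ((N ^ qr - M ^ qr) ^ (1 / qr) / qr ^ (1 / qr)) / ε :=
      (le_div_iff₀ hε).2 (by linarith)
    calc V.toReal * (ε * qr ^ (1 / qr) * (N - M))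
        ≤ (a * C.toReal * ((N ^ qr - M ^ qr) ^ (1 / qr) / qr ^ (1 / qr)) / ε) *
            (ε * qr ^ (1 / qr) * (N - M)) := by
          apply mul_le_mul_of_nonneg_right h2 (by positivity)
      _ = a * C.toReal * (N ^ qr - M ^ qr) ^ (1 / qr) * (N - M) := by
          field_simp
      _ ≤ _ := by
          rw [mul_le_mul_iff_left₀ hNM]
  · -- case p = 1
    intro hp1
    subst hp1
    have hqtop : q = ⊤ := by
      have h1 : (1 : ℝ≥0∞) / 1 = 1 := by simp
      rw [h1] at hpq
      have : 1 / q = 0 := by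
        by_contra h
        have := ENNReal.lt_add_right one_ne_top h
        rw [hpq] at this
        exact lt_irrefl _ this
      rwa [one_div, ENNReal.inv_eq_zero] at this
    subst hqtop
    set C := eLpNorm g ⊤ volume with hCdef
    have hGbd : ∀ x : ℝ, 0 ≤ x → x ≤ N → (‖G x‖₊ : ℝ≥0∞) ≤ C * ENNReal.ofReal N := by
      intro x hx hxN
      have h1 : G x = ∫ t in Set.Ioc 0 x, g t := by
        rw [hG x, intervalIntegral.integral_of_le hx]
      calc (‖G x‖₊ : ℝ≥0∞) ≤ ∫⁻ t in Set.Ioc 0 x, (‖g t‖₊ : ℝ≥0∞) := by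
            rw [h1]; exact enorm_integral_le_lintegral_enorm _
        _ ≤ ∫⁻ _ in Set.Ioc 0 x, eLpNormEssSup g volume := by
            refine lintegral_mono_ae (ae_restrict_of_ae ?_)
            exact enorm_ae_le_eLpNormEssSup g volume
        _ = eLpNormEssSup g volume * volume (Set.Ioc 0 x) := setLIntegral_const _ _
        _ ≤ C * ENNReal.ofReal N := by
            rw [hCdef, eLpNorm_exponent_top, Real.volume_Ioc, sub_zero]
            gcongr
    have hK : C * ENNReal.ofReal N ≠ ⊤ := ENNReal.mul_ne_top hCtop ENNReal.ofReal_ne_top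
    have main : ENNReal.ofReal ε * V ≤
        eLpNorm ((Set.Ioo M N).indicator F) 1 volume * (C * ENNReal.ofReal N) := by
      calc ENNReal.ofReal ε * V ≤ ∫⁻ x, (‖F x‖₊ : ℝ≥0∞) * ‖G x‖₊ ∂μ := cheb
        _ ≤ ∫⁻ x in Set.Ioo M N, (‖F x‖₊ : ℝ≥0∞) * (C * ENNReal.ofReal N) := by
            refine setLIntegral_mono' measurableSet_Ioo fun x hx => ?_
            exact mul_le_mul_right (hGbd x (hM.trans hx.1).le hx.2.le) _
        _ = (∫⁻ x, (‖F x‖₊ : ℝ≥0∞) ∂μ) * (C * ENNReal.ofReal N) :=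
            lintegral_mul_const' _ _ hK
        _ = eLpNorm ((Set.Ioo M N).indicator F) 1 volume * (C * ENNReal.ofReal N) := by
            rw [hAeq, eLpNorm_one_eq_lintegral_enorm]; rfl
    have hfin : eLpNorm ((Set.Ioo M N).indicator F) 1 volume * (C * ENNReal.ofReal N) ≠ ⊤ :=
      ENNReal.mul_ne_top hAtop hK
    have hreal : ε * V.toReal ≤
        (eLpNorm ((Set.Ioo M N).indicator F) 1 volume).toReal * C.toReal * N := by
      have := ENNReal.toReal_mono hfin main
      rw [ENNReal.toReal_mul, ENNReal.toReal_mul, ENNReal.toReal_mul,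
        ENNReal.toReal_ofReal hε.le, ENNReal.toReal_ofReal hN.le] at this
      linarith [this]
    set a := (eLpNorm ((Set.Ioo M N).indicator F) 1 volume).toReal
    rw [div_le_div_iff₀ hNM (by positivity)]
    have h2 : V.toReal ≤ a * C.toReal * N / ε := (le_div_iff₀ hε).2 (by linarith)
    calc V.toReal * (ε * (N - M))
        ≤ (a * C.toReal * N / ε) * (ε * (N - M)) :=
          mul_le_mul_of_nonneg_right h2 (by positivity)
      _ = a * C.toReal * N * (N - M) := by field_simp
      _ ≤ _ := by rw [mul_le_mul_iff_left₀ hNM]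
end

section
/- Let 1 ≤ p < ∞ and let α > 1/p. Suppose f : ℝ → ℝ is measurable, the function t ↦ (1 + |t|^α) f(t) is Lebesgue integrable on ℝ, and ∫_{-∞}^{∞} f(t) dt = 0. Then the function F(x) = ∫_{-∞}^x f(t) dt belongs to L^p(ℝ). -/
open MeasureTheory Filter Topology

/-- If `f : ℝ → ℝ` is measurable, `t ↦ (1 + |t|^α) f(t)` is integrable for some
`α > 1/p` (`1 ≤ p < ∞`) and `∫ f = 0`, then `F(x) = ∫_{-∞}^x f(t) dt` belongs to `L^p(ℝ)`. -/
theorem stmt7 (p α : ℝ) (hp : 1 ≤ p) (hα : 1 / p < α)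
    (f : ℝ → ℝ) (hm : Measurable f)
    (hi : Integrable (fun t => (1 + |t| ^ α) * f t) volume)
    (h0 : ∫ t : ℝ, f t = 0) :
    MemLp (fun x => ∫ t in Set.Iic x, f t) (ENNReal.ofReal p) volume := by
  have hp0 : (0 : ℝ) < p := lt_of_lt_of_le one_pos hp
  have hα0 : (0 : ℝ) < α := lt_trans (div_pos one_pos hp0) hα
  have hαp : (1 : ℝ) < α * p := (div_lt_iff₀ hp0).mp hα
  -- f is integrable
  have hf : Integrable f volume := by
    refine hi.mono hm.aestronglyMeasurable (Filter.Eventually.of_forall fun t => ?_)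
    have h1 : (0:ℝ) ≤ |t| ^ α := Real.rpow_nonneg (abs_nonneg t) α
    rw [Real.norm_eq_abs, Real.norm_eq_abs, abs_mul, abs_of_nonneg (by linarith : (0:ℝ) ≤ 1 + |t| ^ α)]
    nlinarith [abs_nonneg (f t)]
  -- |t|^α * f is integrable
  have hαf : Integrable (fun t => |t| ^ α * f t) volume := by
    have := hi.sub hf
    refine this.congr (Filter.Eventually.of_forall fun t => ?_)
    simp only [Pi.sub_apply]
    ring
  have habs : Integrable (fun t => |t| ^ α * |f t|) volume := by
    refine hαf.abs.congr (Filter.Eventually.of_forall fun t => ?_)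
    show |(|t| ^ α * f t)| = |t| ^ α * |f t|
    rw [abs_mul, abs_of_nonneg (Real.rpow_nonneg (abs_nonneg t) α)]
  set F : ℝ → ℝ := fun x => ∫ t in Set.Iic x, f t with hF
  set M : ℝ := ∫ t, |f t| with hM
  set N : ℝ := ∫ t, |t| ^ α * |f t| with hN
  have hM0 : 0 ≤ M := integral_nonneg fun t => abs_nonneg _
  have hN0 : 0 ≤ N := integral_nonneg fun t => mul_nonneg (Real.rpow_nonneg (abs_nonneg t) α) (abs_nonneg _)
  -- F is continuous
  have hFc : Continuous F := by
    have h1 : Continuous fun x => ∫ t in (0:ℝ)..x, f t :=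
      intervalIntegral.continuous_primitive (fun a b => hf.intervalIntegrable) 0
    have h2 : ∀ x, F x = (∫ t in Set.Iic (0:ℝ), f t) + ∫ t in (0:ℝ)..x, f t := by
      intro x
      rw [← intervalIntegral.integral_Iic_sub_Iic hf.integrableOn hf.integrableOn]
      ring
    simp only [funext h2]
    exact continuous_const.add h1
  -- global bound |F x| ≤ M
  have hFM : ∀ x, |F x| ≤ M := by
    intro x
    calc |F x| ≤ ∫ t in Set.Iic x, |f t| := by
          simpa [Real.norm_eq_abs] using
            norm_integral_le_integral_norm (μ := volume.restrict (Set.Iic x)) f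
      _ ≤ M := setIntegral_le_integral hf.abs (Filter.Eventually.of_forall fun t => abs_nonneg _)
  -- tail bound
  have hFt : ∀ x : ℝ, 1 ≤ |x| → |F x| ≤ |x| ^ (-α) * N := by
    intro x hx
    have hxpos : (0:ℝ) < |x| := lt_of_lt_of_le one_pos hx
    have key : ∀ s : Set ℝ, MeasurableSet s → (∀ t ∈ s, |x| ≤ |t|) →
        (∫ t in s, |f t|) ≤ |x| ^ (-α) * N := by
      intro s hs hts
      have step1 : (∫ t in s, |f t|) ≤ ∫ t in s, |x| ^ (-α) * (|t| ^ α * |f t|) := by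
        refine setIntegral_mono_on hf.abs.integrableOn ((habs.const_mul _).integrableOn) hs ?_
        intro t ht
        have h1 : |x| ^ α ≤ |t| ^ α :=
          Real.rpow_le_rpow (abs_nonneg x) (hts t ht) (le_of_lt hα0)
        have h2 : (0:ℝ) < |x| ^ α := Real.rpow_pos_of_pos hxpos α
        rw [Real.rpow_neg (abs_nonneg x)]
        rw [inv_mul_eq_div, le_div_iff₀ h2]
        calc |f t| * |x| ^ α = |x| ^ α * |f t| := by ring
          _ ≤ |t| ^ α * |f t| := mul_le_mul_of_nonneg_right h1 (abs_nonneg _)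
      have step2 : (∫ t in s, |x| ^ (-α) * (|t| ^ α * |f t|)) ≤ |x| ^ (-α) * N := by
        rw [integral_const_mul]
        refine mul_le_mul_of_nonneg_left ?_ (Real.rpow_nonneg (abs_nonneg x) _)
        exact setIntegral_le_integral habs (Filter.Eventually.of_forall fun t =>
          mul_nonneg (Real.rpow_nonneg (abs_nonneg t) α) (abs_nonneg _))
      exact le_trans step1 step2
    rcases le_or_gt 0 x with hx0 | hx0
    · -- x ≥ 1 : F x = - ∫_{Ioi x} f
      have hcompl : F x = - ∫ t in Set.Ioi x, f t := by
        have := integral_add_compl (measurableSet_Iic (a := x)) hf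
        rw [Set.compl_Iic] at this
        rw [h0] at this
        linarith [this]
      have h1 : |F x| ≤ ∫ t in Set.Ioi x, |f t| := by
        rw [hcompl, abs_neg]
        simpa [Real.norm_eq_abs] using
          norm_integral_le_integral_norm (μ := volume.restrict (Set.Ioi x)) f
      refine le_trans h1 (key _ measurableSet_Ioi fun t ht => ?_)
      have : x ≤ t := le_of_lt ht
      rw [abs_of_nonneg hx0, abs_of_nonneg (le_trans hx0 this)]
      exact this
    · have h1 : |F x| ≤ ∫ t in Set.Iic x, |f t| := by
        simpa [Real.norm_eq_abs] using
          norm_integral_le_integral_norm (μ := volume.restrict (Set.Iic x)) f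
      refine le_trans h1 (key _ measurableSet_Iic fun t ht => ?_)
      have ht' : t ≤ x := ht
      rw [abs_of_neg hx0, abs_of_neg (lt_of_le_of_lt ht' hx0)]
      linarith
  -- the dominating function
  set C : ℝ := 2 ^ α * (M + N) with hC
  have hC0 : 0 ≤ C := mul_nonneg (Real.rpow_nonneg (by norm_num) α) (by linarith)
  have hgmem : MemLp (fun x : ℝ => C * (1 + ‖x‖) ^ (-α)) (ENNReal.ofReal p) volume := by
    have hq0 : ENNReal.ofReal p ≠ 0 := by
      simp [ENNReal.ofReal_eq_zero, not_le, hp0]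
    have hqt : ENNReal.ofReal p ≠ ⊤ := ENNReal.ofReal_ne_top
    have hbase : MemLp (fun x : ℝ => (1 + ‖x‖) ^ (-α)) (ENNReal.ofReal p) volume := by
      have haesm : AEStronglyMeasurable (fun x : ℝ => (1 + ‖x‖) ^ (-α)) volume := by
        apply Continuous.aestronglyMeasurable
        have h1 : Continuous fun x : ℝ => 1 + ‖x‖ := continuous_const.add continuous_norm
        exact h1.rpow_const fun x => Or.inl (by positivity)
      have hiff := memLp_norm_rpow_iff (q := ENNReal.ofReal p) (p := ENNReal.ofReal p)
        haesm hq0 hqt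
      rw [ENNReal.div_self hq0 hqt] at hiff
      rw [← hiff, memLp_one_iff_integrable]
      have hint : Integrable (fun x : ℝ => (1 + ‖x‖) ^ (-(α * p))) volume := by
        apply integrable_one_add_norm (E := ℝ)
        simpa using hαp
      refine hint.congr (Filter.Eventually.of_forall fun x => ?_)
      have h10 : (0:ℝ) ≤ 1 + ‖x‖ := by positivity
      have h20 : (0:ℝ) ≤ (1 + ‖x‖) ^ (-α) := Real.rpow_nonneg h10 _
      show (1 + ‖x‖) ^ (-(α * p)) = ‖(1 + ‖x‖) ^ (-α)‖ ^ (ENNReal.ofReal p).toReal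
      have h20' : (0:ℝ) ≤ (1 + |x|) ^ (-α) := Real.rpow_nonneg (by positivity) _
      rw [ENNReal.toReal_ofReal (le_of_lt hp0)]
      simp only [Real.norm_eq_abs]
      rw [abs_of_nonneg h20', ← Real.rpow_mul (by positivity : (0:ℝ) ≤ 1 + |x|)]
      ring_nf
    exact hbase.const_mul C
  refine hgmem.of_le hFc.aestronglyMeasurable (Filter.Eventually.of_forall fun x => ?_)
  rw [Real.norm_eq_abs (F x), Real.norm_eq_abs]
  have h10 : (0:ℝ) < 1 + ‖x‖ := by positivity
  have hgnn : (0:ℝ) ≤ C * (1 + ‖x‖) ^ (-α) :=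
    mul_nonneg hC0 (Real.rpow_nonneg (le_of_lt h10) _)
  rw [abs_of_nonneg hgnn]
  rcases le_or_gt (|x|) 1 with hx | hx
  · -- |x| ≤ 1
    have h1 : (1 + ‖x‖) ^ α ≤ 2 ^ α := by
      apply Real.rpow_le_rpow (le_of_lt h10) _ (le_of_lt hα0)
      rw [Real.norm_eq_abs]; linarith
    have h2 : (1:ℝ) ≤ 2 ^ α * (1 + ‖x‖) ^ (-α) := by
      have hpos := Real.rpow_pos_of_pos h10 α
      rw [Real.rpow_neg (le_of_lt h10), mul_comm, inv_mul_eq_div, le_div_iff₀ hpos, one_mul]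
      exact h1
    calc |F x| ≤ M := hFM x
      _ ≤ (M + N) * 1 := by linarith
      _ ≤ (M + N) * (2 ^ α * (1 + ‖x‖) ^ (-α)) := by
          apply mul_le_mul_of_nonneg_left h2; linarith
      _ = C * (1 + ‖x‖) ^ (-α) := by rw [hC]; ring
  · -- |x| ≥ 1
    have hx1 : (1:ℝ) ≤ |x| := le_of_lt hx
    have hxpos : (0:ℝ) < |x| := lt_of_lt_of_le one_pos hx1
    have h1 : |x| ^ (-α) ≤ 2 ^ α * (1 + ‖x‖) ^ (-α) := by
      have h2 : (1 + ‖x‖) ^ α ≤ (2 * |x|) ^ α := by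
        apply Real.rpow_le_rpow (le_of_lt h10) _ (le_of_lt hα0)
        rw [Real.norm_eq_abs]; linarith
      have h3 : (2 * |x|) ^ α = 2 ^ α * |x| ^ α :=
        Real.mul_rpow (by norm_num) (abs_nonneg x)
      calc |x| ^ (-α) = 2 ^ α * ((2 * |x|) ^ α)⁻¹ := by
            rw [h3, Real.rpow_neg (abs_nonneg x), mul_inv, ← mul_assoc,
              mul_inv_cancel₀ (ne_of_gt (Real.rpow_pos_of_pos (by norm_num) α)), one_mul]
        _ ≤ 2 ^ α * ((1 + ‖x‖) ^ α)⁻¹ := by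
            exact mul_le_mul_of_nonneg_left
              (inv_anti₀ (Real.rpow_pos_of_pos h10 α) h2)
              (Real.rpow_nonneg (by norm_num) α)
        _ = 2 ^ α * (1 + ‖x‖) ^ (-α) := by rw [Real.rpow_neg (le_of_lt h10)]
    calc |F x| ≤ |x| ^ (-α) * N := hFt x hx1
      _ ≤ (2 ^ α * (1 + ‖x‖) ^ (-α)) * N := by
          apply mul_le_mul_of_nonneg_right h1 hN0
      _ ≤ C * (1 + ‖x‖) ^ (-α) := by
          rw [hC]
          have h5 : (0:ℝ) ≤ (1 + ‖x‖) ^ (-α) := Real.rpow_nonneg (le_of_lt h10) _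
          have h6 : (0:ℝ) ≤ (2:ℝ) ^ α := Real.rpow_nonneg (by norm_num) α
          nlinarith [mul_nonneg (mul_nonneg h6 h5) hM0]
end
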